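/- Let (G, D_G) be a Dirac Lie group, i.e. D_G is a multiplicative Dirac structure, meaning D_G is a subgroupoid of the Pontryagin groupoid TG ⊕ T*G ⇉ g*. Then for every g ∈ G, the characteristic distribution G₀(g) = {v ∈ T_gG | (v,0) ∈ D_G(g)} satisfies G₀(g) = T_eL_g g₀ = T_eR_g g₀, where g₀ = G₀(e); in particular G₀ is both left- and right-invariant and has constant rank. -/

import Mathlib

open scoped Manifold
noncomputable section
namespace DiracPaper

section LagrGen
variable {V : Type*} [NormedAddCommGroup V] [NormedSpace ℝ V]

/-- A subspace of `V ⊕ V*` is Lagrangian if it coincides with its orthogonal for the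
canonical pairing `⟨(x,ξ),(y,η)⟩ = ξ(y) + η(x)`. -/
def IsLagr (D : Submodule ℝ (V × (V →L[ℝ] ℝ))) : Prop :=
  ∀ p : V × (V →L[ℝ] ℝ), p ∈ D ↔ ∀ q ∈ D, p.2 q.1 + q.2 p.1 = 0

end LagrGen

variable {E : Type*} [NormedAddCommGroup E] [NormedSpace ℝ E]
variable {G : Type*} [TopologicalSpace G] [ChartedSpace E G] [Group G] [LieGroup 𝓘(ℝ, E) (⊤ : ℕ∞) G]

/-- The differential of left translation `L_g` at the point `h` (all tangent spaces being
identified with the model space `E`). -/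
def dL (g h : G) : E →L[ℝ] E := mfderiv 𝓘(ℝ, E) 𝓘(ℝ, E) (fun x => g * x) h

/-- The differential of right translation `R_h` at the point `g`. -/
def dR (h g : G) : E →L[ℝ] E := mfderiv 𝓘(ℝ, E) 𝓘(ℝ, E) (fun x => x * h) g

/-- The differential at the neutral element of a real valued function on `G`. -/
def d1 (f : G → ℝ) : E →L[ℝ] ℝ := mfderiv 𝓘(ℝ, E) 𝓘(ℝ, ℝ) f (1 : G)

/-- The left invariant vector field associated to `x ∈ 𝔤 = T_e G`. -/
def xL (x : E) (g : G) : E := dL g 1 x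

/-- The left invariant one-form associated to `ξ ∈ 𝔤*`: `ξ^L(g) = (T_g L_{g⁻¹})^* ξ`. -/
def leftForm (ξ : E →L[ℝ] ℝ) (g : G) : E →L[ℝ] ℝ := ξ.comp (dL g⁻¹ g)

/-- The right invariant one-form associated to `ξ ∈ 𝔤*`: `ξ^R(g) = (T_g R_{g⁻¹})^* ξ`. -/
def rightForm (ξ : E →L[ℝ] ℝ) (g : G) : E →L[ℝ] ℝ := ξ.comp (dR g⁻¹ g)

/-- The adjoint action of `G` on `𝔤 = T_e G`. -/
def Ad (g : G) : E →L[ℝ] E := mfderiv 𝓘(ℝ, E) 𝓘(ℝ, E) (fun x => g * x * g⁻¹) 1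

variable (G) in
/-- The adjoint action of `𝔤` on itself, obtained by differentiating `Ad` at `e`;
`adCLM G x y = ⁅x, y⁆`. -/
def adCLM : E →L[ℝ] E →L[ℝ] E :=
  mfderiv 𝓘(ℝ, E) 𝓘(ℝ, E →L[ℝ] E) (Ad : G → (E →L[ℝ] E)) 1

variable (G) in
/-- The Lie bracket on `𝔤 = T_e G`. -/
def bra (x y : E) : E := adCLM G x y

variable (G) in
/-- The coadjoint action: `(coadW G x ξ) y = ξ ⁅y, x⁆`, i.e. `ad_x^* ξ`. -/
def coadW (x : E) (ξ : E →L[ℝ] ℝ) : E →L[ℝ] ℝ := ξ.comp ((adCLM G).flip x)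


/-- Multiplicativity of a field of subspaces `D(g) ⊆ T_g G ⊕ T_g^* G`: group multiplication
is a forward Dirac map. -/
def MultDirac (D : G → Submodule ℝ (E × (E →L[ℝ] ℝ))) : Prop :=
  ∀ g h : G, ∀ p ∈ D (g * h), ∃ w u : E, ∃ β γ : E →L[ℝ] ℝ,
    (w, β) ∈ D g ∧ (u, γ) ∈ D h ∧ dR h g w + dL g h u = p.1 ∧
    β = p.2.comp (dR h g) ∧ γ = p.2.comp (dL g h)

/-- `𝔤₀ = G₀(e)`, the kernel of the Dirac structure at the neutral element. -/
def g0set (D : G → Submodule ℝ (E × (E →L[ℝ] ℝ))) : Set E := {x | (x, 0) ∈ D 1}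

/-- `𝔭₁ = P₁(e)`, the characteristic codistribution at the neutral element. -/
def p1set (D : G → Submodule ℝ (E × (E →L[ℝ] ℝ))) : Set (E →L[ℝ] ℝ) :=
  {ξ | ∃ x, (x, ξ) ∈ D 1}

/-- A smooth vector field `X = X_ξ` such that `(X_ξ, ξ^L)` is a section of `D`. -/
def SmoothSec (D : G → Submodule ℝ (E × (E →L[ℝ] ℝ))) (ξ : E →L[ℝ] ℝ) (X : G → E) : Prop :=
  ContMDiff 𝓘(ℝ, E) 𝓘(ℝ, E) (⊤ : ℕ∞) X ∧ ∀ g, (X g, leftForm ξ g) ∈ D g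

/-- `p1br η X_ξ = [ξ, η] = d_e (η^L (X_ξ))`, the bracket of `ξ, η ∈ 𝔭₁` computed with a
choice of vector field `X_ξ`. -/
def p1br (η : E →L[ℝ] ℝ) (X : G → E) : E →L[ℝ] ℝ := d1 (fun g => leftForm η g (X g))

/-- `z ∈ 𝔤` represents `ad_η^* x ∈ 𝔤/𝔤₀ = 𝔭₁^*`, which is defined by
`(ad_η^* x)(θ) = [θ, η](x)`. -/
def RepAdStar (D : G → Submodule ℝ (E × (E →L[ℝ] ℝ))) (η : E →L[ℝ] ℝ) (x z : E) : Prop :=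
  ∀ θ ∈ p1set D, ∀ Xθ : G → E, SmoothSec D θ Xθ → θ z = p1br η Xθ x

/-- A one-parameter subgroup `c` of `G` with derivative `x` at `0` (playing the role of
`t ↦ exp (t x)`). -/
def OneParam (c : ℝ → G) (x : E) : Prop :=
  ContMDiff 𝓘(ℝ, ℝ) 𝓘(ℝ, E) (⊤ : ℕ∞) c ∧ c 0 = 1 ∧ (∀ s t : ℝ, c (s + t) = c s * c t) ∧
    (id (mfderiv 𝓘(ℝ, ℝ) 𝓘(ℝ, E) c 0 (1 : ℝ)) : E) = x

section Courant

variable {F : Type*} [NormedAddCommGroup F] [NormedSpace ℝ F]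
variable {M : Type*} [TopologicalSpace M] [ChartedSpace F M]

/-- The Lie bracket of two vector fields, computed in the trivialization of the tangent
bundle given by the identification `TangentSpace 𝓘(ℝ,F) m = F`. -/
def vLie (X Y : M → F) (m : M) : F :=
  (id (mfderiv 𝓘(ℝ, F) 𝓘(ℝ, F) Y m (X m)) : F) -
    (id (mfderiv 𝓘(ℝ, F) 𝓘(ℝ, F) X m (Y m)) : F)

/-- The Lie derivative `£_X β` of a one-form `β` along a vector field `X`, in the same
trivialization. -/
def lieDform (X : M → F) (β : M → (F →L[ℝ] ℝ)) (m : M) : F →L[ℝ] ℝ :=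
  (id (mfderiv 𝓘(ℝ, F) 𝓘(ℝ, F →L[ℝ] ℝ) β m (X m)) : F →L[ℝ] ℝ) +
    (β m).comp (id (mfderiv 𝓘(ℝ, F) 𝓘(ℝ, F) X m) : F →L[ℝ] F)

/-- The contraction `i_Y dα`, in the same trivialization. -/
def iotaDform (Y : M → F) (α : M → (F →L[ℝ] ℝ)) (m : M) : F →L[ℝ] ℝ :=
  (id (mfderiv 𝓘(ℝ, F) 𝓘(ℝ, F →L[ℝ] ℝ) α m (Y m)) : F →L[ℝ] ℝ) -
    (id (mfderiv 𝓘(ℝ, F) 𝓘(ℝ, F →L[ℝ] ℝ) α m) : F →L[ℝ] (F →L[ℝ] ℝ)).flip (Y m)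

/-- Integrability of a Dirac structure: closure of the space of smooth sections under the
Courant–Dorfman bracket `[(X,α),(Y,β)] = ([X,Y], £_X β − i_Y dα)`. -/
def CourantClosed (D : M → Submodule ℝ (F × (F →L[ℝ] ℝ))) : Prop :=
  ∀ (X Y : M → F) (α β : M → (F →L[ℝ] ℝ)),
    ContMDiff 𝓘(ℝ, F) 𝓘(ℝ, F) (⊤ : ℕ∞) X → ContMDiff 𝓘(ℝ, F) 𝓘(ℝ, F →L[ℝ] ℝ) (⊤ : ℕ∞) α →
    ContMDiff 𝓘(ℝ, F) 𝓘(ℝ, F) (⊤ : ℕ∞) Y → ContMDiff 𝓘(ℝ, F) 𝓘(ℝ, F →L[ℝ] ℝ) (⊤ : ℕ∞) β →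
    (∀ m, (X m, α m) ∈ D m) → (∀ m, (Y m, β m) ∈ D m) →
    ∀ m, (vLie X Y m, lieDform X β m - iotaDform Y α m) ∈ D m

end Courant

/-!
STATEMENT 3: for a Dirac Lie group `(G, D_G)`, the characteristic distribution
`G₀(g) = {v ∈ T_g G | (v,0) ∈ D_G(g)}` satisfies `G₀(g) = T_e L_g 𝔤₀ = T_e R_g 𝔤₀`
where `𝔤₀ = G₀(e)`; in particular it is left and right invariant of constant rank.
-/

lemma lemA (D : G → Submodule ℝ (E × (E →L[ℝ] ℝ)))
    (hLag : ∀ g : G, IsLagr (D g)) (hMult : MultDirac D) (a b : G) (v : E)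
    (hv : (v, (0 : E →L[ℝ] ℝ)) ∈ D b) :
    (dL a b v, (0 : E →L[ℝ] ℝ)) ∈ D (a * b) := by
  rw [hLag (a * b)]
  intro q hq
  obtain ⟨w, u, β, γ, hw, hu, hsum, hβ, hγ⟩ := hMult a b q hq
  have hpair := (hLag b (u, γ)).mp hu (v, 0) hv
  simp only [ContinuousLinearMap.zero_apply, add_zero] at hpair
  -- hpair : γ v = 0
  have : q.2 (dL a b v) = 0 := by
    rw [hγ] at hpair; exact hpair
  simpa using this

lemma lemB (D : G → Submodule ℝ (E × (E →L[ℝ] ℝ)))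
    (hLag : ∀ g : G, IsLagr (D g)) (hMult : MultDirac D) (a b : G) (v : E)
    (hv : (v, (0 : E →L[ℝ] ℝ)) ∈ D a) :
    (dR b a v, (0 : E →L[ℝ] ℝ)) ∈ D (a * b) := by
  rw [hLag (a * b)]
  intro q hq
  obtain ⟨w, u, β, γ, hw, hu, hsum, hβ, hγ⟩ := hMult a b q hq
  have hpair := (hLag a (w, β)).mp hw (v, 0) hv
  simp only [ContinuousLinearMap.zero_apply, add_zero] at hpair
  have : q.2 (dR b a v) = 0 := by
    rw [hβ] at hpair; exact hpair
  simpa using this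

lemma dL_comp (g h k : G) :
    (dL (E := E) g (h * k)).comp (dL h k) = dL (g * h) k := by
  have hf : MDifferentiableAt 𝓘(ℝ, E) 𝓘(ℝ, E) (fun x : G => h * x) k :=
    mdifferentiableAt_mul_left
  have hg : MDifferentiableAt 𝓘(ℝ, E) 𝓘(ℝ, E) (fun x : G => g * x) (h * k) :=
    mdifferentiableAt_mul_left
  have hcomp := mfderiv_comp k hg hf
  have : (fun x => g * x) ∘ (fun x => h * x) = fun x => (g * h) * x := by
    funext x; simp [mul_assoc]
  rw [this] at hcomp
  exact hcomp.symm

lemma dR_comp (g h k : G) :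
    (dR (E := E) k (g * h)).comp (dR h g) = dR (h * k) g := by
  have hf : MDifferentiableAt 𝓘(ℝ, E) 𝓘(ℝ, E) (fun x : G => x * h) g :=
    mdifferentiableAt_mul_right
  have hg : MDifferentiableAt 𝓘(ℝ, E) 𝓘(ℝ, E) (fun x : G => x * k) (g * h) :=
    mdifferentiableAt_mul_right
  have hcomp := mfderiv_comp g hg hf
  have : (fun x => x * k) ∘ (fun x => x * h) = fun x => x * (h * k) := by
    funext x; simp [mul_assoc]
  rw [this] at hcomp
  exact hcomp.symm

lemma dL_one (k : G) : dL (1 : G) k = ContinuousLinearMap.id ℝ E := by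
  have : (fun x : G => (1 : G) * x) = id := by funext x; simp
  rw [dL, this, mfderiv_id]
  rfl

lemma dR_one (g : G) : dR (1 : G) g = ContinuousLinearMap.id ℝ E := by
  have : (fun x : G => x * (1 : G)) = id := by funext x; simp
  rw [dR, this, mfderiv_id]
  rfl

theorem dirac_lie_group_characteristic_distribution
    (D : G → Submodule ℝ (E × (E →L[ℝ] ℝ)))
    (hLag : ∀ g : G, IsLagr (D g)) (hMult : MultDirac D) :
    ∀ g : G,
      {v : E | (v, (0 : E →L[ℝ] ℝ)) ∈ D g} = ⇑(dL g (1 : G)) '' g0set D ∧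
      {v : E | (v, (0 : E →L[ℝ] ℝ)) ∈ D g} = ⇑(dR g (1 : G)) '' g0set D := by
  intro g
  constructor
  · apply Set.Subset.antisymm
    · intro v hv
      refine ⟨dL g⁻¹ g v, ?_, ?_⟩
      · have := lemA D hLag hMult g⁻¹ g v hv
        rwa [inv_mul_cancel] at this
      · have hc : (dL (E := E) g (g⁻¹ * g)).comp (dL g⁻¹ g) = dL (g * g⁻¹) g := dL_comp g g⁻¹ g
        rw [inv_mul_cancel, mul_inv_cancel] at hc
        have : dL g 1 (dL g⁻¹ g v) = dL 1 g v := by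
          rw [← ContinuousLinearMap.comp_apply, hc]
        rw [this, dL_one]
        rfl
    · rintro v ⟨u, hu, rfl⟩
      have := lemA D hLag hMult g 1 u hu
      rwa [mul_one] at this
  · apply Set.Subset.antisymm
    · intro v hv
      refine ⟨dR g⁻¹ g v, ?_, ?_⟩
      · have := lemB D hLag hMult g g⁻¹ v hv
        rwa [mul_inv_cancel] at this
      · have hc : (dR (E := E) g (g * g⁻¹)).comp (dR g⁻¹ g) = dR (g⁻¹ * g) g := dR_comp g g⁻¹ g
        rw [inv_mul_cancel, mul_inv_cancel] at hc
        have : dR g 1 (dR g⁻¹ g v) = dR 1 g v := by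
          rw [← ContinuousLinearMap.comp_apply, hc]
        rw [this, dR_one]
        rfl
    · rintro v ⟨u, hu, rfl⟩
      have := lemB D hLag hMult 1 g u hu
      rwa [one_mul] at this


end DiracPaper
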